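/- Let n ≥ 2 with 3 | n and let r ≡ 2 (mod 3). Then the element 1 + x − x^r is not a unit in the group algebra 𝔽₂[C_n] of the cyclic group C_n = ⟨x⟩; consequently there exist no δ, γ ∈ ℤ[C_n] with δ(1 + x − x^r) + γ(1 + x^{-1} − x^{-r}) = 1. -/

import Mathlib

open MonoidAlgebra Multiplicative
abbrev R3 := MonoidAlgebra (ZMod 2) (Multiplicative (ZMod 3))
noncomputable def yy : R3 := MonoidAlgebra.of (ZMod 2) _ (ofAdd (1 : ZMod 3))
lemma two_eq_zero : (2 : R3) = 0 := by
  have : (2:R3) = algebraMap (ZMod 2) R3 2 := (map_ofNat _ 2).symm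
  rw [this, show (2:ZMod 2) = 0 from rfl, map_zero]
lemma negself (a : R3) : -a = a := by
  have : a + a = 0 := by rw [← two_mul, two_eq_zero, zero_mul]
  linear_combination -this
lemma yne : yy ≠ 1 := by
  intro h
  have := MonoidAlgebra.of_injective (R := ZMod 2) (M := Multiplicative (ZMod 3)) (h.trans (map_one _).symm)
  exact absurd this (by decide)
lemma keyl : (yy - 1) * (1 + yy + yy^2) = 0 := by
  have h : yy^3 = 1 := by
    rw [yy, ← map_pow, show (ofAdd (1:ZMod 3))^3 = 1 from by decide, map_one]
  linear_combination h
lemma notunit : ¬ IsUnit (1 + yy + yy^2) := by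
  rintro ⟨u, hu⟩
  have : yy - 1 = 0 := by
    calc yy - 1 = ((yy-1) * u) * ↑u⁻¹ := by rw [mul_assoc]; simp
    _ = 0 := by rw [hu, keyl, zero_mul]
  exact yne (by linear_combination this)
lemma castr (r : ℤ) (hr : r % 3 = 2) : ((r:ℤ) : ZMod 3) = 2 := by
  have : ((r - 2 : ℤ) : ZMod 3) = 0 := (ZMod.intCast_zmod_eq_zero_iff_dvd _ _).mpr (by omega)
  push_cast at this
  linear_combination this
lemma g3pow (r : ℤ) : (ofAdd (1:ZMod 3)) ^ r = ofAdd ((r : ZMod 3)) := by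
  rw [← ofAdd_zsmul]
  norm_num

/-- Let `n ≥ 2` with `3 ∣ n` and `r ≡ 2 (mod 3)`. Writing `x` for a generator of the cyclic
group `C_n`, the element `1 + x − x^r` is not a unit in `𝔽₂[C_n]`; consequently there are no
`δ, γ ∈ ℤ[C_n]` with `δ(1 + x − x^r) + γ(1 + x^{-1} − x^{-r}) = 1`. -/
theorem stmt_9 (n : ℕ) (hn : 2 ≤ n) (h3 : 3 ∣ n) (r : ℤ) (hr : r % 3 = 2)
    (g : Multiplicative (ZMod n)) (hg : g = Multiplicative.ofAdd (1 : ZMod n)) :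
    (¬ IsUnit ((1 : MonoidAlgebra (ZMod 2) (Multiplicative (ZMod n)))
        + MonoidAlgebra.of (ZMod 2) _ g - MonoidAlgebra.of (ZMod 2) _ (g ^ r))) ∧
    (¬ ∃ δ γ : MonoidAlgebra ℤ (Multiplicative (ZMod n)),
        δ * (1 + MonoidAlgebra.of ℤ _ g - MonoidAlgebra.of ℤ _ (g ^ r))
          + γ * (1 + MonoidAlgebra.of ℤ _ g⁻¹ - MonoidAlgebra.of ℤ _ (g ^ (-r))) = 1) := by
  set π : Multiplicative (ZMod n) →* Multiplicative (ZMod 3) :=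
    AddMonoidHom.toMultiplicative (ZMod.castHom h3 (ZMod 3)).toAddMonoidHom with hπdef
  have hπg : π g = ofAdd (1 : ZMod 3) := by
    rw [hg]
    show ofAdd ((ZMod.castHom h3 (ZMod 3)) (1 : ZMod n)) = ofAdd 1
    rw [map_one]
  have hπgr : π (g ^ r) = (ofAdd (1:ZMod 3))^2 := by
    rw [map_zpow, hπg, g3pow, castr r hr]; decide
  have hπginv : π g⁻¹ = (ofAdd (1:ZMod 3))^2 := by
    rw [map_inv, hπg]; decide
  have hπgnr : π (g ^ (-r)) = ofAdd (1:ZMod 3) := by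
    rw [map_zpow, hπg, g3pow]
    congr 1
    push_cast
    rw [castr r hr]; decide
  constructor
  · intro h
    let F : Multiplicative (ZMod n) →* R3 :=
      (MonoidAlgebra.of (ZMod 2) (Multiplicative (ZMod 3))).comp π
    let φ := MonoidAlgebra.lift (ZMod 2) R3 (Multiplicative (ZMod n)) F
    have h2 := h.map φ
    have e1 : φ (MonoidAlgebra.of (ZMod 2) _ g) = yy := by
      rw [MonoidAlgebra.lift_of]
      show MonoidAlgebra.of (ZMod 2) _ (π g) = yy
      rw [hπg, yy]
    have e2 : φ (MonoidAlgebra.of (ZMod 2) _ (g^r)) = yy^2 := by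
      rw [MonoidAlgebra.lift_of]
      show MonoidAlgebra.of (ZMod 2) _ (π (g^r)) = yy^2
      rw [hπgr, map_pow, yy]
    rw [map_sub, map_add, map_one, e1, e2] at h2
    rw [sub_eq_add_neg, negself] at h2
    exact notunit h2
  · rintro ⟨δ, γ, hEq⟩
    let F : Multiplicative (ZMod n) →* R3 :=
      (MonoidAlgebra.of (ZMod 2) (Multiplicative (ZMod 3))).comp π
    let ψ := MonoidAlgebra.lift ℤ R3 (Multiplicative (ZMod n)) F
    have h2 := congrArg ψ hEq
    have e1 : ψ (MonoidAlgebra.of ℤ _ g) = yy := by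
      rw [MonoidAlgebra.lift_of]
      show MonoidAlgebra.of (ZMod 2) _ (π g) = yy
      rw [hπg, yy]
    have e2 : ψ (MonoidAlgebra.of ℤ _ (g^r)) = yy^2 := by
      rw [MonoidAlgebra.lift_of]
      show MonoidAlgebra.of (ZMod 2) _ (π (g^r)) = yy^2
      rw [hπgr, map_pow, yy]
    have e3 : ψ (MonoidAlgebra.of ℤ _ g⁻¹) = yy^2 := by
      rw [MonoidAlgebra.lift_of]
      show MonoidAlgebra.of (ZMod 2) _ (π g⁻¹) = yy^2
      rw [hπginv, map_pow, yy]
    have e4 : ψ (MonoidAlgebra.of ℤ _ (g^(-r))) = yy := by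
      rw [MonoidAlgebra.lift_of]
      show MonoidAlgebra.of (ZMod 2) _ (π (g^(-r))) = yy
      rw [hπgnr, yy]
    rw [map_add, map_mul, map_mul, map_sub, map_add, map_one, map_sub, map_add, map_one,
      e1, e2, e3, e4] at h2
    refine notunit (IsUnit.of_mul_eq_one (ψ δ + ψ γ) ?_)
    have hy2 : -(yy^2) = yy^2 := negself _
    have hy1 : -yy = yy := negself _
    linear_combination h2 - ψ δ * hy2 - ψ γ * hy1
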